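/- Let k be a field and let n ≥ 1. Every k-linear subspace of M_n(k) all of whose elements are nilpotent and pairwise commute has dimension at most ⌊n²/4⌋, and there exists such a subspace of dimension exactly ⌊n²/4⌋ (for example, the space of matrices supported in the upper-right ⌈n/2⌉ × ⌊n/2⌋ block). -/

import Mathlib

open Matrix


lemma pow2_helper (i j K l : ℕ) (hij : j < i) (hkl : l < K)
    (h : 2^i + 2^l = 2^K + 2^j) : i = K ∧ j = l := by
  have hK : i = K := by
    by_contra hne
    rcases Nat.lt_or_ge i K with hik | hik
    · have h1 : 2^(i+1) ≤ 2^K := Nat.pow_le_pow_right (by norm_num) (by omega)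
      have h2 : 2^(l+1) ≤ 2^K := Nat.pow_le_pow_right (by norm_num) (by omega)
      have h3 : (1:ℕ) ≤ 2^j := Nat.one_le_two_pow
      have e1 : 2^(i+1) = 2*2^i := by ring
      have e2 : 2^(l+1) = 2*2^l := by ring
      generalize 2^i = a at *
      generalize 2^j = b at *
      generalize 2^K = c at *
      generalize 2^l = d at *
      omega
    · have hik' : K < i := by omega
      have h1 : 2^(K+1) ≤ 2^i := Nat.pow_le_pow_right (by norm_num) (by omega)
      have h2 : 2^(j+1) ≤ 2^i := Nat.pow_le_pow_right (by norm_num) (by omega)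
      have h3 : (1:ℕ) ≤ 2^l := Nat.one_le_two_pow
      have e1 : 2^(K+1) = 2*2^K := by ring
      have e2 : 2^(j+1) = 2*2^j := by ring
      generalize 2^i = a at *
      generalize 2^j = b at *
      generalize 2^K = c at *
      generalize 2^l = d at *
      omega
  subst hK
  have : 2^l = 2^j := by omega
  exact ⟨rfl, (Nat.pow_right_injective (le_refl 2) this).symm⟩
lemma wlt {n : ℕ} (a b : Fin n) : ((2:ℤ)^(a:ℕ) < 2^(b:ℕ)) ↔ a < b := by
  rw [pow_lt_pow_iff_right₀ (by norm_num : (1:ℤ) < 2)]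
  exact Fin.lt_iff_val_lt_val.symm

lemma wle {n : ℕ} (a b : Fin n) : ((2:ℤ)^(a:ℕ) ≤ 2^(b:ℕ)) ↔ a ≤ b := by
  rw [pow_le_pow_iff_right₀ (by norm_num : (1:ℤ) < 2)]
  exact Fin.le_iff_val_le_val.symm

lemma weq {n : ℕ} {a b : Fin n} (h : (2:ℤ)^(a:ℕ) = 2^(b:ℕ)) : a = b := by
  have h1 := (wle a b).1 h.le
  have h2 := (wle b a).1 h.ge
  exact le_antisymm h1 h2
lemma d_inj {n : ℕ} (i j K l : Fin n) (hij : i ≠ j) (hkl : K ≠ l)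
    (h : (2:ℤ)^(i:ℕ) - 2^(j:ℕ) = 2^(K:ℕ) - 2^(l:ℕ)) : i = K ∧ j = l := by
  rcases lt_or_gt_of_ne hij with hij' | hij' <;> rcases lt_or_gt_of_ne hkl with hkl' | hkl'
  · -- i < j, K < l : both negative
    have hn : ((2:ℕ)^(j:ℕ) + 2^(K:ℕ) : ℤ) = ((2:ℕ)^(l:ℕ) + 2^(i:ℕ) : ℤ) := by push_cast; linarith
    have hn' : (2:ℕ)^(j:ℕ) + 2^(K:ℕ) = 2^(l:ℕ) + 2^(i:ℕ) := by exact_mod_cast hn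
    obtain ⟨h1, h2⟩ := pow2_helper (j:ℕ) (i:ℕ) (l:ℕ) (K:ℕ) (Fin.lt_iff_val_lt_val.1 hij')
      (Fin.lt_iff_val_lt_val.1 hkl') hn'
    exact ⟨Fin.val_injective h2, Fin.val_injective h1⟩
  · exfalso
    have a1 : (2:ℤ)^(i:ℕ) < 2^(j:ℕ) := (wlt i j).2 hij'
    have a2 : (2:ℤ)^(l:ℕ) < 2^(K:ℕ) := (wlt l K).2 hkl'
    linarith
  · exfalso
    have a1 : (2:ℤ)^(j:ℕ) < 2^(i:ℕ) := (wlt j i).2 hij'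
    have a2 : (2:ℤ)^(K:ℕ) < 2^(l:ℕ) := (wlt K l).2 hkl'
    linarith
  · have hn : ((2:ℕ)^(i:ℕ) + 2^(l:ℕ) : ℤ) = ((2:ℕ)^(K:ℕ) + 2^(j:ℕ) : ℤ) := by push_cast; linarith
    have hn' : (2:ℕ)^(i:ℕ) + 2^(l:ℕ) = 2^(K:ℕ) + 2^(j:ℕ) := by exact_mod_cast hn
    obtain ⟨h1, h2⟩ := pow2_helper (i:ℕ) (j:ℕ) (K:ℕ) (l:ℕ) (Fin.lt_iff_val_lt_val.1 hij')
      (Fin.lt_iff_val_lt_val.1 hkl') hn'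
    exact ⟨Fin.val_injective h1, Fin.val_injective h2⟩
lemma tri_pow {k : Type*} [Field k] {n : ℕ} (x : Matrix (Fin n) (Fin n) k)
    (htri : ∀ i j : Fin n, i < j → x i j = 0) (m : ℕ) :
    (∀ i j : Fin n, i < j → (x^m) i j = 0) ∧ (∀ i : Fin n, (x^m) i i = (x i i)^m) := by
  induction m with
  | zero =>
    constructor
    · intro i j hij
      simp [pow_zero, Matrix.one_apply, Fin.ne_of_lt hij]
    · intro i; simp [pow_zero, Matrix.one_apply]
  | succ m ih =>
    have key : ∀ i j : Fin n, ((x^(m+1)) i j) = ∑ t, (x^m) i t * x t j := by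
      intro i j; rw [pow_succ, Matrix.mul_apply]
    constructor
    · intro i j hij
      rw [key]
      apply Finset.sum_eq_zero
      intro t _
      rcases lt_trichotomy i t with h | h | h
      · rw [ih.1 i t h, zero_mul]
      · subst h; rw [htri i j hij, mul_zero]
      · rw [htri t j (lt_trans h hij), mul_zero]
    · intro i
      rw [key]
      rw [Finset.sum_eq_single i]
      · rw [ih.2 i, pow_succ]
      · intro t _ ht
        rcases lt_or_gt_of_ne ht with h | h
        · rw [htri t i h, mul_zero]
        · rw [ih.1 i t h, zero_mul]
      · intro h; exact absurd (Finset.mem_univ i) h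

lemma tri_diag_zero {k : Type*} [Field k] {n : ℕ} (x : Matrix (Fin n) (Fin n) k)
    (htri : ∀ i j : Fin n, i < j → x i j = 0) (hx : IsNilpotent x) (i : Fin n) : x i i = 0 := by
  obtain ⟨m, hm⟩ := hx
  have hm' : x^(m+1) = 0 := by rw [pow_succ, hm, Matrix.zero_mul]
  have := (tri_pow x htri (m+1)).2 i
  rw [hm'] at this
  have : (x i i)^(m+1) = 0 := by simpa using this.symm
  exact pow_eq_zero_iff (Nat.succ_ne_zero m) |>.1 this
section UpperAux
variable {k : Type*} [Field k] {n : ℕ}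

/-- degree of a matrix position -/
def ddeg {n : ℕ} (p : Fin n × Fin n) : ℤ := 2^(p.1:ℕ) - 2^(p.2:ℕ)

/-- the set of leading positions of a subspace -/
def leadSet (V : Submodule k (Matrix (Fin n) (Fin n) k)) : Set (Fin n × Fin n) :=
  {p | p.1 ≠ p.2 ∧ ∃ x ∈ V, x p.1 p.2 ≠ 0 ∧
    ∀ q : Fin n × Fin n, ddeg q < ddeg p → x q.1 q.2 = 0}

lemma lead_exists (V : Submodule k (Matrix (Fin n) (Fin n) k))
    (hnil : ∀ M ∈ V, IsNilpotent M)
    (x : Matrix (Fin n) (Fin n) k) (hxV : x ∈ V) (hx : x ≠ 0) :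
    ∃ p ∈ leadSet V, x p.1 p.2 ≠ 0 := by
  classical
  have hne : (Finset.univ.filter fun p : Fin n × Fin n => x p.1 p.2 ≠ 0).Nonempty := by
    by_contra h
    rw [Finset.not_nonempty_iff_eq_empty, Finset.filter_eq_empty_iff] at h
    apply hx
    ext i j
    have := h (Finset.mem_univ (i, j))
    simpa using this
  obtain ⟨p, hp, hmin⟩ := Finset.exists_min_image _ ddeg hne
  rw [Finset.mem_filter] at hp
  have hxp : x p.1 p.2 ≠ 0 := hp.2
  have hx3 : ∀ q : Fin n × Fin n, ddeg q < ddeg p → x q.1 q.2 = 0 := by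
    intro q hq
    by_contra hq0
    have := hmin q (Finset.mem_filter.2 ⟨Finset.mem_univ q, hq0⟩)
    omega
  have hp12 : p.1 ≠ p.2 := by
    intro hdiag
    have hdp : ddeg p = 0 := by
      unfold ddeg; rw [hdiag]; ring
    have htri : ∀ i j : Fin n, i < j → x i j = 0 := by
      intro i j hij
      apply hx3 (i, j)
      rw [hdp]
      have : (2:ℤ)^(i:ℕ) < 2^(j:ℕ) := (wlt i j).2 hij
      unfold ddeg
      simp only
      linarith
    have := tri_diag_zero x htri (hnil x hxV) p.1
    exact hxp (by rw [← hdiag]; exact this)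
  exact ⟨p, ⟨hp12, x, hxV, hxp, hx3⟩, hxp⟩

lemma lead_key (V : Submodule k (Matrix (Fin n) (Fin n) k))
    (hcomm : ∀ M ∈ V, ∀ N ∈ V, M * N = N * M)
    (p : Fin n × Fin n) (hp : p ∈ leadSet V)
    (q : Fin n × Fin n) (hq : q ∈ leadSet V) : p.2 ≠ q.1 := by
  classical
  obtain ⟨hp12, x, hxV, hxp, hx3⟩ := hp
  obtain ⟨hq12, y, hyV, hyq, hy3⟩ := hq
  intro hpq  -- hpq : p.2 = q.1
  have hcom := hcomm x hxV y hyV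
  have h1 : (x*y) p.1 q.2 = (y*x) p.1 q.2 := by rw [hcom]
  rw [Matrix.mul_apply, Matrix.mul_apply] at h1
  have hL : ∑ m, x p.1 m * y m q.2 = x p.1 p.2 * y q.1 q.2 := by
    rw [Finset.sum_eq_single_of_mem p.2 (Finset.mem_univ _)]
    · rw [hpq]
    · intro m _ hm
      by_contra hz
      obtain ⟨hz1, hz2⟩ := mul_ne_zero_iff.1 hz
      have d1 : ¬ ddeg (p.1, m) < ddeg p := fun h => hz1 (hx3 (p.1, m) h)
      have d2 : ¬ ddeg (m, q.2) < ddeg q := fun h => hz2 (hy3 (m, q.2) h)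
      unfold ddeg at d1 d2
      simp only [not_lt] at d1 d2
      -- d1 : 2^p.1 - 2^p.2 ≤ 2^p.1 - 2^m, d2 : 2^q.1 - 2^q.2 ≤ 2^m - 2^q.2
      have e1 : (2:ℤ)^(m:ℕ) ≤ 2^(p.2:ℕ) := by linarith
      have e2 : (2:ℤ)^((q.1):ℕ) ≤ 2^(m:ℕ) := by linarith
      rw [hpq] at e1
      have : (2:ℤ)^(m:ℕ) = 2^((q.1):ℕ) := le_antisymm e1 e2
      have hmq : m = q.1 := weq this
      rw [hpq] at hm
      exact hm hmq
  have hR : ∑ m, y p.1 m * x m q.2 = 0 := by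
    apply Finset.sum_eq_zero
    intro m _
    by_contra hz
    obtain ⟨hz1, hz2⟩ := mul_ne_zero_iff.1 hz
    have d3 : ¬ ddeg (p.1, m) < ddeg q := fun h => hz1 (hy3 (p.1, m) h)
    have d4 : ¬ ddeg (m, q.2) < ddeg p := fun h => hz2 (hx3 (m, q.2) h)
    unfold ddeg at d3 d4
    simp only [not_lt] at d3 d4
    have hw : (2:ℤ)^((p.2):ℕ) = 2^((q.1):ℕ) := by rw [hpq]
    -- equality case
    have heq : (2:ℤ)^((p.1):ℕ) - 2^(m:ℕ) = 2^((q.1):ℕ) - 2^((q.2):ℕ) := by linarith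
    by_cases hpm : p.1 = m
    · rw [hpm] at heq
      have : (2:ℤ)^((q.1):ℕ) = 2^((q.2):ℕ) := by linarith
      exact hq12 (weq this)
    · obtain ⟨hA, hB⟩ := d_inj p.1 m q.1 q.2 hpm hq12 heq
      apply hp12
      rw [hpq, ← hA]
  rw [hL, hR] at h1
  exact mul_ne_zero hxp hyq h1

end UpperAux


section Arith
lemma arith2 {a b n : ℕ} (h : a + b ≤ n) : a * b ≤ n^2/4 := by
  have h1 : 2*a*b ≤ a^2 + b^2 := two_mul_le_add_sq a b
  have h2 : a*b*4 ≤ (a+b)^2 := by nlinarith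
  have h3 : (a+b)^2 ≤ n^2 := Nat.pow_le_pow_left h 2
  rw [Nat.le_div_iff_mul_le (by norm_num)]
  omega

lemma arith1 {n : ℕ} : (n - n/2) * (n/2) = n^2/4 := by
  rcases Nat.even_or_odd n with ⟨q, hq⟩ | ⟨q, hq⟩
  · subst hq
    have e1 : q + q - (q+q)/2 = q := by omega
    have e2 : (q+q)/2 = q := by omega
    rw [e1, e2]
    have : (q+q)^2 = (q*q)*4 := by ring
    omega
  · subst hq
    have e2 : (2*q+1)/2 = q := by omega
    have e1 : 2*q + 1 - (2*q+1)/2 = q+1 := by omega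
    rw [e1, e2]
    have : (2*q+1)^2 = ((q+1)*q)*4 + 1 := by ring
    rw [this]
    omega

end Arith

noncomputable section Main
variable {k : Type*} [Field k] {n : ℕ}

lemma upper_bound (V : Submodule k (Matrix (Fin n) (Fin n) k))
    (hnil : ∀ M ∈ V, IsNilpotent M)
    (hcomm : ∀ M ∈ V, ∀ N ∈ V, M * N = N * M) :
    Module.finrank k V ≤ n ^ 2 / 4 := by
  classical
  set S := leadSet V with hS
  haveI : Fintype ↥S := Fintype.ofFinite _
  let φ : V →ₗ[k] (↥S → k) :=
    { toFun := fun x s => (x : Matrix (Fin n) (Fin n) k) s.1.1 s.1.2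
      map_add' := fun x y => rfl
      map_smul' := fun c x => rfl }
  have hφ : Function.Injective φ := by
    rw [← LinearMap.ker_eq_bot]
    rw [LinearMap.ker_eq_bot']
    intro z hz
    by_contra hz0
    have hz0' : (z : Matrix (Fin n) (Fin n) k) ≠ 0 := by
      simpa [Submodule.coe_eq_zero] using hz0
    obtain ⟨p, hpS, hpz⟩ := lead_exists V hnil z z.2 hz0'
    have := congrFun hz ⟨p, hpS⟩
    exact hpz this
  have h1 : Module.finrank k V ≤ Fintype.card ↥S := by
    have := LinearMap.finrank_le_finrank_of_injective hφ
    rwa [Module.finrank_pi] at this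
  -- combinatorial bound on card S
  let Sf := S.toFinset
  let A := Sf.image Prod.fst
  let B := Sf.image Prod.snd
  have hsub : Sf ⊆ A ×ˢ B := by
    intro p hp
    exact Finset.mem_product.2 ⟨Finset.mem_image_of_mem _ hp, Finset.mem_image_of_mem _ hp⟩
  have hdisj : Disjoint A B := by
    rw [Finset.disjoint_left]
    intro i hiA hiB
    obtain ⟨p, hp, hpi⟩ := Finset.mem_image.1 hiA
    obtain ⟨q, hq, hqi⟩ := Finset.mem_image.1 hiB
    exact lead_key V hcomm q (Set.mem_toFinset.1 hq) p (Set.mem_toFinset.1 hp) (by rw [hqi, hpi])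
  have hcard : Fintype.card ↥S = Sf.card := (Set.toFinset_card S).symm
  have h2 : Sf.card ≤ A.card * B.card := by
    calc Sf.card ≤ (A ×ˢ B).card := Finset.card_le_card hsub
    _ = A.card * B.card := Finset.card_product A B
  have h3 : A.card + B.card ≤ n := by
    rw [← Finset.card_union_of_disjoint hdisj]
    calc (A ∪ B).card ≤ Finset.univ.card := Finset.card_le_univ _
    _ = n := by simp
  calc Module.finrank k V ≤ Fintype.card ↥S := h1
    _ = Sf.card := hcard
    _ ≤ A.card * B.card := h2
    _ ≤ n^2/4 := arith2 h3


lemma exists_part (hn : 1 ≤ n) :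
    ∃ V : Submodule k (Matrix (Fin n) (Fin n) k),
      (∀ M ∈ V, IsNilpotent M) ∧ (∀ M ∈ V, ∀ N ∈ V, M * N = N * M) ∧
      Module.finrank k V = n ^ 2 / 4 := by
  classical
  set b := n / 2 with hb
  set a := n - n / 2 with ha
  have hab : a + b = n := by omega
  let e : Fin a ⊕ Fin b ≃ Fin n := finSumFinEquiv.trans (finCongr hab)
  let ψ := Matrix.reindexAlgEquiv k k e
  let g : Matrix (Fin a) (Fin b) k →ₗ[k] Matrix (Fin a ⊕ Fin b) (Fin a ⊕ Fin b) k :=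
    { toFun := fun X => Matrix.fromBlocks 0 X 0 0
      map_add' := by
        intro X Y
        ext (i|i) (j|j) <;> simp [Matrix.fromBlocks]
      map_smul' := by
        intro c X
        ext (i|i) (j|j) <;> simp [Matrix.fromBlocks] }
  refine ⟨(LinearMap.range g).map ψ.toLinearEquiv.toLinearMap, ?_, ?_, ?_⟩
  · rintro M hM
    obtain ⟨-, ⟨X, rfl⟩, rfl⟩ := hM
    refine ⟨2, ?_⟩
    rw [pow_two]
    have : ψ (g X) * ψ (g X) = ψ (g X * g X) := (_root_.map_mul ψ _ _).symm
    rw [show ψ.toLinearEquiv.toLinearMap (g X) = ψ (g X) from rfl, this]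
    have hz : g X * g X = 0 := by
      show Matrix.fromBlocks 0 X 0 0 * Matrix.fromBlocks 0 X 0 0 = 0
      rw [Matrix.fromBlocks_multiply]
      simp
    rw [hz, map_zero]
  · rintro M hM N hN
    obtain ⟨-, ⟨X, rfl⟩, rfl⟩ := hM
    obtain ⟨-, ⟨Y, rfl⟩, rfl⟩ := hN
    show ψ (g X) * ψ (g Y) = ψ (g Y) * ψ (g X)
    rw [← _root_.map_mul ψ, ← _root_.map_mul ψ]
    congr 1
    show Matrix.fromBlocks 0 X 0 0 * Matrix.fromBlocks 0 Y 0 0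
       = Matrix.fromBlocks 0 Y 0 0 * Matrix.fromBlocks 0 X 0 0
    rw [Matrix.fromBlocks_multiply, Matrix.fromBlocks_multiply]
    simp
  · rw [LinearEquiv.finrank_map_eq]
    have hinj : Function.Injective g := by
      intro X Y hXY
      have := congrArg Matrix.toBlocks₁₂ hXY
      change (Matrix.fromBlocks 0 X 0 0).toBlocks₁₂ = (Matrix.fromBlocks 0 Y 0 0).toBlocks₁₂ at this
      simpa [Matrix.toBlocks_fromBlocks₁₂] using this
    rw [LinearMap.finrank_range_of_inj hinj, Module.finrank_matrix]
    simp only [Fintype.card_fin, Module.finrank_self, mul_one]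
    exact arith1

end Main

/-- Over any field `k` and for `n ≥ 1`, every `k`-linear subspace of
`M_n(k)` consisting of pairwise-commuting nilpotent matrices has dimension at most
`⌊n²/4⌋`, and there exists such a subspace of dimension exactly `⌊n²/4⌋`. -/
theorem max_dim_nilpotent_commuting_subspace {k : Type*} [Field k] {n : ℕ} (hn : 1 ≤ n) :
    (∀ V : Submodule k (Matrix (Fin n) (Fin n) k),
      (∀ M ∈ V, IsNilpotent M) → (∀ M ∈ V, ∀ N ∈ V, M * N = N * M) →
      Module.finrank k V ≤ n ^ 2 / 4) ∧
    ∃ V : Submodule k (Matrix (Fin n) (Fin n) k),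
      (∀ M ∈ V, IsNilpotent M) ∧ (∀ M ∈ V, ∀ N ∈ V, M * N = N * M) ∧
      Module.finrank k V = n ^ 2 / 4 := by
  exact ⟨fun V h1 h2 => upper_bound V h1 h2, exists_part hn⟩
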